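/- Let z ∈ ℂ and let α and β be positive real numbers with αβ = 1. Then √α·(e^(−z²/8)/(2α) − e^(z²/8)·∑_{n=1}^∞ e^(−π·α²·n²)·cos(√π·α·n·z)) = √β·(e^(z²/8)/(2β) − e^(−z²/8)·∑_{n=1}^∞ e^(−π·β²·n²)·cosh(√π·β·n·z)). -/

import Mathlib

open scoped Real
open MeasureTheory

/-- Rising factorial (Pochhammer symbol) `(a)_n`. -/
noncomputable def poch (a : ℂ) (n : ℕ) : ℂ := (ascPochhammer ℂ n).eval a

/-- Confluent hypergeometric function `₁F₁(a;c;w)`. -/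
noncomputable def oneF1 (a c w : ℂ) : ℂ :=
  ∑' n : ℕ, poch a n * w ^ n / (poch c n * n.factorial)

/-- The hypergeometric function `₂F₂(1,1;3/2,2;w)`. -/
noncomputable def twoF2 (w : ℂ) : ℂ :=
  ∑' n : ℕ, poch 1 n * poch 1 n * w ^ n / (poch (3/2) n * poch 2 n * n.factorial)

/-- The Riemann xi function `ξ(s) = (1/2) s (s-1) π^(-s/2) Γ(s/2) ζ(s)`. -/
noncomputable def xiR (s : ℂ) : ℂ :=
  (1 / 2) * s * (s - 1) * (π : ℂ) ^ (-s / 2) * Complex.Gamma (s / 2) * riemannZeta s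

/-- The Riemann Xi function `Ξ(t) = ξ(1/2 + i t)`. -/
noncomputable def XiR (t : ℂ) : ℂ := xiR (1 / 2 + Complex.I * t)

/-- `ρ(x,z,s) = x^(1/2-s) e^(-z²/8) ₁F₁((1-s)/2; 1/2; z²/4)`. -/
noncomputable def rhoF (x : ℝ) (z s : ℂ) : ℂ :=
  (x : ℂ) ^ ((1 : ℂ) / 2 - s) * Complex.exp (-z ^ 2 / 8) *
    oneF1 ((1 - s) / 2) (1 / 2) (z ^ 2 / 4)

/-- `∇(x,z,s) = ρ(x,z,s) + ρ(x,z,1-s)`. -/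
noncomputable def nablaF (x : ℝ) (z s : ℂ) : ℂ := rhoF x z s + rhoF x z (1 - s)

/-- The digamma function `ψ(x) = Γ'(x)/Γ(x)`. -/
noncomputable def digamma (x : ℝ) : ℝ := deriv Real.Gamma x / Real.Gamma x

/-- The modified Bessel function of order zero, `K₀(x) = ∫₀^∞ e^(-x cosh u) du`. -/
noncomputable def besselK0 (x : ℝ) : ℝ := ∫ u in Set.Ioi (0 : ℝ), Real.exp (-x * Real.cosh u)

section ThetaAux

open Complex

lemma theta_nat_cos (w τ : ℂ) (hτ : 0 < τ.im) :
    jacobiTheta₂ w τ = 1 + 2 * ∑' n : ℕ,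
      Complex.exp (π * I * ((n : ℂ) + 1) ^ 2 * τ) * Complex.cos (2 * π * ((n : ℂ) + 1) * w) := by
  set f : ℤ → ℂ := fun n => jacobiTheta₂_term n w τ with hf
  have hs : Summable f := (summable_jacobiTheta₂_term_iff w τ).mpr hτ
  have h1 : Summable fun n : ℕ ↦ f ((n : ℤ) + 1) := by
    apply hs.comp_injective (i := fun n : ℕ => (n : ℤ) + 1)
    intro a b h
    simpa using h
  have h2 : Summable fun n : ℕ ↦ f (-((n : ℤ) + 1)) := by
    apply hs.comp_injective (i := fun n : ℕ => -((n : ℤ) + 1))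
    intro a b h
    simp only [neg_inj, add_left_inj, Nat.cast_inj] at h
    exact_mod_cast h
  have key : ∀ n : ℕ, f ((n : ℤ) + 1) + f (-((n : ℤ) + 1))
      = 2 * (Complex.exp (π * I * ((n : ℂ) + 1) ^ 2 * τ) * Complex.cos (2 * π * ((n : ℂ) + 1) * w)) := by
    intro n
    have h2c := Complex.two_cos (x := 2 * π * ((n : ℂ) + 1) * w)
    simp only [hf, jacobiTheta₂_term]
    push_cast
    rw [show (2 : ℂ) * (Complex.exp (π * I * ((n : ℂ) + 1) ^ 2 * τ) * Complex.cos (2 * π * ((n : ℂ) + 1) * w))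
        = Complex.exp (π * I * ((n : ℂ) + 1) ^ 2 * τ) * (2 * Complex.cos (2 * π * ((n : ℂ) + 1) * w)) by ring,
      h2c]
    conv_rhs => rw [mul_add, ← Complex.exp_add, ← Complex.exp_add]
    congr 2 <;> ring
  have f0 : f 0 = 1 := by
    simp [hf, jacobiTheta₂_term]
  rw [jacobiTheta₂, show (∑' n : ℤ, jacobiTheta₂_term n w τ) = ∑' n, f n from rfl,
    tsum_of_add_one_of_neg_add_one h1 h2, f0]
  rw [show (∑' n : ℕ, f ((n : ℤ) + 1)) + 1 + ∑' n : ℕ, f (-((n : ℤ) + 1))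
      = ((∑' n : ℕ, f ((n : ℤ) + 1)) + ∑' n : ℕ, f (-((n : ℤ) + 1))) + 1 from by ring,
    ← Summable.tsum_add h1 h2, tsum_congr key, tsum_mul_left]
  ring

theorem stmt2 (z : ℂ) (α β : ℝ) (hα : 0 < α) (hβ : 0 < β) (hαβ : α * β = 1) :
    (Real.sqrt α : ℂ) * (Complex.exp (-z ^ 2 / 8) / (2 * α) -
      Complex.exp (z ^ 2 / 8) * ∑' n : ℕ,
        Complex.exp (-(π : ℂ) * α ^ 2 * (n + 1) ^ 2) *
          Complex.cos ((Real.sqrt π : ℂ) * α * (n + 1) * z)) =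
    (Real.sqrt β : ℂ) * (Complex.exp (z ^ 2 / 8) / (2 * β) -
      Complex.exp (-z ^ 2 / 8) * ∑' n : ℕ,
        Complex.exp (-(π : ℂ) * β ^ 2 * (n + 1) ^ 2) *
          Complex.cosh ((Real.sqrt π : ℂ) * β * (n + 1) * z)) := by
  have hπ := Real.pi_pos
  have hsπ : (0:ℝ) < Real.sqrt π := Real.sqrt_pos.mpr hπ
  have hsq2 : ((Real.sqrt π : ℂ)) ^ 2 = (π : ℂ) := by
    rw [sq, ← Complex.ofReal_mul, Real.mul_self_sqrt hπ.le]
  have hsπc : (Real.sqrt π : ℂ) ≠ 0 := by exact_mod_cast hsπ.ne'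
  have hαc : (α : ℂ) ≠ 0 := by exact_mod_cast hα.ne'
  have hβc : (β : ℂ) ≠ 0 := by exact_mod_cast hβ.ne'
  have hab : (α : ℂ) * (β : ℂ) = 1 := by exact_mod_cast hαβ
  set w : ℂ := (α : ℂ) * z / (2 * (Real.sqrt π : ℂ)) with hw
  set τ : ℂ := ((α : ℂ)) ^ 2 * I with hτdef
  set w' : ℂ := -(I * ((β : ℂ) * z / (2 * (Real.sqrt π : ℂ)))) with hw'
  set τ' : ℂ := ((β : ℂ)) ^ 2 * I with hτ'def
  have hτim : 0 < τ.im := by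
    rw [hτdef, show ((α : ℂ)) ^ 2 = (((α ^ 2 : ℝ)) : ℂ) by push_cast; ring,
      Complex.mul_I_im, Complex.ofReal_re]
    positivity
  have hτ'im : 0 < τ'.im := by
    rw [hτ'def, show ((β : ℂ)) ^ 2 = (((β ^ 2 : ℝ)) : ℂ) by push_cast; ring,
      Complex.mul_I_im, Complex.ofReal_re]
    positivity
  have hτne : τ ≠ 0 := by
    rw [hτdef]; exact mul_ne_zero (pow_ne_zero 2 hαc) Complex.I_ne_zero
  set Sα : ℂ := ∑' n : ℕ, Complex.exp (-(π : ℂ) * α ^ 2 * ((n : ℂ) + 1) ^ 2) *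
      Complex.cos ((Real.sqrt π : ℂ) * α * ((n : ℂ) + 1) * z) with hSα
  set Sβ : ℂ := ∑' n : ℕ, Complex.exp (-(π : ℂ) * β ^ 2 * ((n : ℂ) + 1) ^ 2) *
      Complex.cosh ((Real.sqrt π : ℂ) * β * ((n : ℂ) + 1) * z) with hSβ
  -- theta values
  have hθα : jacobiTheta₂ w τ = 1 + 2 * Sα := by
    rw [theta_nat_cos w τ hτim]
    congr 2
    apply tsum_congr
    intro n
    congr 1
    · congr 1
      rw [hτdef]
      linear_combination (π : ℂ) * ((n : ℂ) + 1) ^ 2 * (α : ℂ) ^ 2 * Complex.I_sq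
    · congr 1
      rw [hw, ← hsq2]
      field_simp
  have hθβ : jacobiTheta₂ w' τ' = 1 + 2 * Sβ := by
    rw [theta_nat_cos w' τ' hτ'im]
    congr 2
    apply tsum_congr
    intro n
    congr 1
    · congr 1
      rw [hτ'def]
      linear_combination (π : ℂ) * ((n : ℂ) + 1) ^ 2 * (β : ℂ) ^ 2 * Complex.I_sq
    · have harg : 2 * (π : ℂ) * ((n : ℂ) + 1) * w'
          = -(((Real.sqrt π : ℂ) * β * ((n : ℂ) + 1) * z) * I) := by
        rw [hw', ← hsq2]
        field_simp
      rw [harg, Complex.cos_neg, Complex.cos_mul_I]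
  -- functional equation pieces
  have hwτ : w / τ = w' := by
    rw [hw, hw', hτdef, div_eq_iff hτne]
    field_simp
    linear_combination ((α:ℂ)^2 * (β:ℂ) * z) * Complex.I_sq + (-(α:ℂ) * z) * hab
  have hτinv : -1 / τ = τ' := by
    rw [hτdef, hτ'def, div_eq_iff hτne]
    linear_combination (-(α:ℂ)^2*(β:ℂ)^2) * Complex.I_sq + (((α:ℂ)*(β:ℂ) + 1)) * hab
  have hfac1 : (1 : ℂ) / (-I * τ) ^ (1/2 : ℂ) = 1 / (α : ℂ) := by
    have h1 : -I * τ = ((α ^ 2 : ℝ) : ℂ) := by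
      rw [hτdef]; push_cast
      linear_combination (-(α:ℂ)^2) * Complex.I_sq
    rw [h1]
    congr 1
    rw [show (1/2 : ℂ) = ((1/2 : ℝ) : ℂ) by norm_num, ← Complex.ofReal_cpow (by positivity)]
    rw [← Real.rpow_natCast α 2, ← Real.rpow_mul hα.le]
    norm_num
  have hfac2 : Complex.exp (-π * I * w ^ 2 / τ) = Complex.exp (-z ^ 2 / 4) := by
    congr 1
    rw [hw, hτdef, div_eq_div_iff hτne (by norm_num), ← hsq2]
    field_simp
    ring
  have FE := jacobiTheta₂_functional_equation w τ
  rw [hwτ, hτinv, hfac1, hfac2, hθα, hθβ] at FE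
  -- FE : 1 + 2 * Sα = 1 / α * cexp (-z^2/4) * (1 + 2 * Sβ)
  set a : ℂ := (Real.sqrt α : ℂ) with ha'
  set b : ℂ := (Real.sqrt β : ℂ) with hb'
  have ha : a * a = (α : ℂ) := by
    rw [ha', ← Complex.ofReal_mul, Real.mul_self_sqrt hα.le]
  have hb : b * b = (β : ℂ) := by
    rw [hb', ← Complex.ofReal_mul, Real.mul_self_sqrt hβ.le]
  have hane : a ≠ 0 := by
    rw [ha']; exact_mod_cast (Real.sqrt_pos.mpr hα).ne'
  have hbne : b ≠ 0 := by
    rw [hb']; exact_mod_cast (Real.sqrt_pos.mpr hβ).ne'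
  have hab2 : a * b = 1 := by
    rw [ha', hb', ← Complex.ofReal_mul, ← Real.sqrt_mul hα.le, hαβ, Real.sqrt_one,
      Complex.ofReal_one]
  set E : ℂ := Complex.exp (z ^ 2 / 8) with hE'
  set F : ℂ := Complex.exp (-z ^ 2 / 8) with hF'
  have hEF : E * F = 1 := by
    rw [hE', hF', ← Complex.exp_add, show z ^ 2 / 8 + -z ^ 2 / 8 = 0 by ring, Complex.exp_zero]
  have hFF : Complex.exp (-z ^ 2 / 4) = F * F := by
    rw [hF', ← Complex.exp_add]; congr 1; ring
  rw [hFF] at FE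
  rw [← ha, ← hb]
  field_simp at FE ⊢
  linear_combination (-b*E) * FE + (-b*E*(1+2*Sα)) * ha
    + (a*E + 2*F*Sβ*b) * hab2 + (-b*F*(1+2*Sβ)) * hEF

end ThetaAux
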